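/- arXiv:2601.17896 — 2 statements merged into one kernel-verified Lean document; each statement's English description precedes it below -/
import Mathlib

section
/- For every p ∈ (1, ∞) there exists a constant C = C(p) > 0 such that for every real inner product space H and all a, b ∈ H, setting V(x) = ‖x‖^{(p−2)/2}·x (with V(0) = 0): (1) ‖V(a) − V(b)‖² ≤ C·⟨‖a‖^{p−2}a − ‖b‖^{p−2}b, a − b⟩; and (2) if (a, b) ≠ (0, 0), then C⁻¹·‖a − b‖²·(‖a‖ + ‖b‖)^{p−2} ≤ ‖V(a) − V(b)‖² ≤ C·‖a − b‖²·(‖a‖ + ‖b‖)^{p−2}. -/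
noncomputable section

namespace Paper

universe u

open Real

lemma bern_ge {r α β : ℝ} (hr : 1 ≤ r) (hα : 0 < α) (hβ : 0 ≤ β) :
    α ^ r + r * (α ^ (r - 1) * (β - α)) ≤ β ^ r := by
  have hs : (-1 : ℝ) ≤ β / α - 1 := by
    have : 0 ≤ β / α := div_nonneg hβ hα.le
    linarith
  have h := one_add_mul_self_le_rpow_one_add hs hr
  have h1 : (1 + (β / α - 1)) = β / α := by ring
  rw [h1, div_rpow hβ hα.le] at h
  have hαr : 0 < α ^ r := rpow_pos_of_pos hα r
  have h2 : α ^ (r - 1) = α ^ r / α := rpow_sub_one hα.ne' r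
  have h3 := mul_le_mul_of_nonneg_left h hαr.le
  rw [h2]
  calc α ^ r + r * (α ^ r / α * (β - α)) = α ^ r * (1 + r * (β / α - 1)) := by
        field_simp
    _ ≤ α ^ r * (β ^ r / α ^ r) := h3
    _ = β ^ r := by field_simp
lemma bern_le {r α β : ℝ} (hr0 : 0 ≤ r) (hr : r ≤ 1) (hα : 0 < α) (hβ : 0 ≤ β) :
    β ^ r ≤ α ^ r + r * (α ^ (r - 1) * (β - α)) := by
  have hs : (-1 : ℝ) ≤ β / α - 1 := by
    have : 0 ≤ β / α := div_nonneg hβ hα.le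
    linarith
  have h := rpow_one_add_le_one_add_mul_self hs hr0 hr
  have h1 : (1 + (β / α - 1)) = β / α := by ring
  rw [h1, div_rpow hβ hα.le] at h
  have hαr : 0 < α ^ r := rpow_pos_of_pos hα r
  have h2 : α ^ (r - 1) = α ^ r / α := rpow_sub_one hα.ne' r
  have h3 := mul_le_mul_of_nonneg_left h hαr.le
  rw [h2]
  calc β ^ r = α ^ r * (β ^ r / α ^ r) := by field_simp
    _ ≤ α ^ r * (1 + r * (β / α - 1)) := h3
    _ = α ^ r + r * (α ^ r / α * (β - α)) := by field_simp

lemma key_bounds {r : ℝ} (hr : 0 < r) :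
    ∃ c C : ℝ, 0 < c ∧ 0 < C ∧ ∀ α β : ℝ, 0 ≤ β → β ≤ α →
      c * ((α - β) * (α + β) ^ (r - 1)) ≤ α ^ r - β ^ r ∧
      α ^ r - β ^ r ≤ C * ((α - β) * (α + β) ^ (r - 1)) := by
  rcases le_or_gt 1 r with h1 | h1
  · refine ⟨(2:ℝ) ^ ((1:ℝ) - r), r, rpow_pos_of_pos two_pos _, hr, ?_⟩
    intro α β hβ hβα
    rcases eq_or_lt_of_le (hβ.trans hβα) with h0 | hα
    · have hα0 : α = 0 := h0.symm
      have hβ0 : β = 0 := le_antisymm (hα0 ▸ hβα) hβ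
      subst hα0; subst hβ0
      simp
    -- α > 0
    have hab : α ≤ α + β := by linarith
    have h2α : α + β ≤ 2 * α := by linarith
    have hrm1 : (0:ℝ) ≤ r - 1 := by linarith
    -- lower: β^r ≤ β * α^(r-1)
    have hlow : β ^ r ≤ β * α ^ (r - 1) := by
      rcases eq_or_lt_of_le hβ with h0 | hβpos
      · rw [← h0, zero_rpow hr.ne', zero_mul]
      · have : β ^ (r - 1) ≤ α ^ (r - 1) := rpow_le_rpow hβ hβα hrm1
        calc β ^ r = β ^ (r - 1) * β := by
              rw [rpow_sub_one hβpos.ne']; field_simp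
          _ ≤ α ^ (r - 1) * β := by nlinarith
          _ = β * α ^ (r - 1) := by ring
    have hαr : α ^ r = α * α ^ (r - 1) := by
      rw [rpow_sub_one hα.ne']; field_simp
    constructor
    · -- c * ((α-β)*(α+β)^(r-1)) ≤ (α-β)*α^(r-1) ≤ α^r - β^r
      have e1 : (α + β) ^ (r - 1) ≤ 2 ^ (r - 1) * α ^ (r - 1) := by
        calc (α + β) ^ (r - 1) ≤ (2 * α) ^ (r - 1) :=
              rpow_le_rpow (by linarith) h2α hrm1
          _ = 2 ^ (r - 1) * α ^ (r - 1) := mul_rpow (by norm_num) hα.le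
      have e2 : (2:ℝ) ^ ((1:ℝ) - r) * 2 ^ (r - 1) = 1 := by
        rw [← rpow_add two_pos]; norm_num
      have e3 : (2:ℝ) ^ ((1:ℝ) - r) * (α + β) ^ (r - 1) ≤ α ^ (r - 1) := by
        have h4 := mul_le_mul_of_nonneg_left e1 (rpow_nonneg (by norm_num : (0:ℝ) ≤ 2) ((1:ℝ) - r))
        rw [← mul_assoc, e2, one_mul] at h4
        exact h4
      have h5 : (α - β) * ((2:ℝ) ^ ((1:ℝ) - r) * (α + β) ^ (r - 1)) ≤ (α - β) * α ^ (r - 1) :=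
        mul_le_mul_of_nonneg_left e3 (by linarith)
      nlinarith
    · have hb := bern_ge h1 hα hβ
      have e1 : α ^ (r - 1) ≤ (α + β) ^ (r - 1) := rpow_le_rpow hα.le hab hrm1
      nlinarith [mul_nonneg (sub_nonneg.mpr hβα) (rpow_nonneg (le_trans hα.le hab) (r - 1)),
        mul_le_mul_of_nonneg_left e1 (mul_nonneg hr.le (sub_nonneg.mpr hβα))]
  · refine ⟨r, (2:ℝ) ^ ((1:ℝ) - r), hr, rpow_pos_of_pos two_pos _, ?_⟩
    intro α β hβ hβα
    rcases eq_or_lt_of_le (hβ.trans hβα) with h0 | hα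
    · have hα0 : α = 0 := h0.symm
      have hβ0 : β = 0 := le_antisymm (hα0 ▸ hβα) hβ
      subst hα0; subst hβ0
      simp
    have hab : α ≤ α + β := by linarith
    have h2α : α + β ≤ 2 * α := by linarith
    have hrm1 : r - 1 ≤ 0 := by linarith
    have hαr : α ^ r = α * α ^ (r - 1) := by
      rw [rpow_sub_one hα.ne']; field_simp
    constructor
    · have hb := bern_le hr.le h1.le hα hβ
      have e1 : (α + β) ^ (r - 1) ≤ α ^ (r - 1) := rpow_le_rpow_of_nonpos hα hab hrm1
      nlinarith [mul_le_mul_of_nonneg_left e1 (mul_nonneg hr.le (sub_nonneg.mpr hβα))]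
    · -- upper: α^r - β^r ≤ (α-β)*α^(r-1) ≤ 2^(1-r) (α-β)(α+β)^(r-1)
      have hup : β * α ^ (r - 1) ≤ β ^ r := by
        rcases eq_or_lt_of_le hβ with h0 | hβpos
        · rw [← h0, zero_rpow hr.ne', zero_mul]
        · have h6 : α ^ (r - 1) ≤ β ^ (r - 1) := rpow_le_rpow_of_nonpos hβpos hβα hrm1
          calc β * α ^ (r - 1) ≤ β * β ^ (r - 1) := by nlinarith
            _ = β ^ r := by rw [rpow_sub_one hβpos.ne']; field_simp
      have e1 : (2:ℝ) ^ (r - 1) * α ^ (r - 1) ≤ (α + β) ^ (r - 1) := by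
        calc (2:ℝ) ^ (r - 1) * α ^ (r - 1) = (2 * α) ^ (r - 1) :=
              (mul_rpow (by norm_num) hα.le).symm
          _ ≤ (α + β) ^ (r - 1) := rpow_le_rpow_of_nonpos (by linarith) h2α hrm1
      have e2 : (2:ℝ) ^ ((1:ℝ) - r) * 2 ^ (r - 1) = 1 := by
        rw [← rpow_add two_pos]; norm_num
      have e3 : α ^ (r - 1) ≤ (2:ℝ) ^ ((1:ℝ) - r) * (α + β) ^ (r - 1) := by
        have h4 := mul_le_mul_of_nonneg_left e1 (rpow_nonneg (by norm_num : (0:ℝ) ≤ 2) ((1:ℝ) - r))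
        rw [← mul_assoc, e2, one_mul] at h4
        exact h4
      have h5 : (α - β) * α ^ (r - 1) ≤ (α - β) * ((2:ℝ) ^ ((1:ℝ) - r) * (α + β) ^ (r - 1)) :=
        mul_le_mul_of_nonneg_left e3 (by linarith)
      nlinarith

lemma rpow_mul_self_eq {x : ℝ} (hx : 0 ≤ x) {e f : ℝ} (hef : e + 1 = f) (hf : f ≠ 0) :
    x ^ e * x = x ^ f := by
  rcases hx.eq_or_lt with h | h
  · rw [← h, mul_zero, zero_rpow hf]
  · rw [← hef, rpow_add_one h.ne' e]

lemma rpow_sq_self_eq {x : ℝ} (hx : 0 ≤ x) {e f : ℝ} (hef : e + e = f) :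
    x ^ e * x ^ e = x ^ f := by
  rcases hx.eq_or_lt with h | h
  · rcases eq_or_ne e 0 with rfl | he
    · rw [← hef]; norm_num
    · have hf : f ≠ 0 := by rw [← hef]; intro h2; apply he; linarith
      rw [← h, zero_rpow he, zero_rpow hf, mul_zero]
  · rw [← hef, rpow_add h]

lemma sq_mul_rpow_eq {x : ℝ} (hx : 0 ≤ x) {p : ℝ} (hp : 0 < p) :
    x ^ (2:ℕ) * x ^ (p - 2) = x ^ p := by
  rcases hx.eq_or_lt with h | h
  · rw [← h, zero_rpow hp.ne']; norm_num
  · have h2 : x ^ (2:ℕ) = x ^ ((2:ℕ):ℝ) := (rpow_natCast x 2).symm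
    rw [h2, ← rpow_add h]; norm_num

set_option maxHeartbeats 1000000 in
lemma scalar_main (p : ℝ) (hp : 1 < p) :
    ∃ C : ℝ, 0 < C ∧ ∀ α β : ℝ, 0 ≤ α → 0 ≤ β →
      ((α ^ (p/2) - β ^ (p/2)) ^ 2 ≤ C * ((α ^ (p-1) - β ^ (p-1)) * (α - β)) ∧
       (α ^ (p/2) + β ^ (p/2)) ^ 2 ≤ C * ((α ^ (p-1) + β ^ (p-1)) * (α + β)) ∧
       (α ^ (p/2) - β ^ (p/2)) ^ 2 ≤ C * ((α - β) ^ 2 * (α + β) ^ (p-2)) ∧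
       (α ^ (p/2) + β ^ (p/2)) ^ 2 ≤ C * ((α + β) ^ 2 * (α + β) ^ (p-2)) ∧
       C⁻¹ * ((α - β) ^ 2 * (α + β) ^ (p-2)) ≤ (α ^ (p/2) - β ^ (p/2)) ^ 2 ∧
       C⁻¹ * ((α + β) ^ 2 * (α + β) ^ (p-2)) ≤ (α ^ (p/2) + β ^ (p/2)) ^ 2) := by
  have hσ : (0:ℝ) < p / 2 := by linarith
  have hp1 : (0:ℝ) < p - 1 := by linarith
  obtain ⟨c₁, C₁, hc₁, hC₁, h₁⟩ := key_bounds hσ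
  obtain ⟨c₂, C₂, hc₂, hC₂, h₂⟩ := key_bounds hp1
  set C : ℝ := C₁ ^ 2 / c₂ + C₁ ^ 2 + 4 + (c₁ ^ 2)⁻¹ + 2 ^ p with hCdef
  have h2p : (0:ℝ) < 2 ^ p := rpow_pos_of_pos two_pos p
  have hcinv : (0:ℝ) < (c₁ ^ 2)⁻¹ := by positivity
  have hdiv : (0:ℝ) < C₁ ^ 2 / c₂ := by positivity
  have hC : 0 < C := by positivity
  have hCinv1 : C⁻¹ ≤ c₁ ^ 2 := by
    rw [inv_le_comm₀ hC (by positivity)]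
    rw [hCdef]; linarith [sq_nonneg C₁]
  have hCinv2 : C⁻¹ * 2 ^ p ≤ 1 := by
    rw [← le_div_iff₀ h2p, div_eq_mul_inv, one_mul]
    apply inv_anti₀ h2p
    rw [hCdef]; linarith [sq_nonneg C₁]
  have hC1 : C₁ ^ 2 / c₂ ≤ C := by rw [hCdef]; linarith [sq_nonneg C₁]
  have hC2 : C₁ ^ 2 ≤ C := by rw [hCdef]; linarith
  have hC4 : (4:ℝ) ≤ C := by rw [hCdef]; linarith [sq_nonneg C₁]
  have aux : ∀ α β : ℝ, 0 ≤ β → β ≤ α →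
      ((α ^ (p/2) - β ^ (p/2)) ^ 2 ≤ C * ((α ^ (p-1) - β ^ (p-1)) * (α - β)) ∧
       (α ^ (p/2) + β ^ (p/2)) ^ 2 ≤ C * ((α ^ (p-1) + β ^ (p-1)) * (α + β)) ∧
       (α ^ (p/2) - β ^ (p/2)) ^ 2 ≤ C * ((α - β) ^ 2 * (α + β) ^ (p-2)) ∧
       (α ^ (p/2) + β ^ (p/2)) ^ 2 ≤ C * ((α + β) ^ 2 * (α + β) ^ (p-2)) ∧
       C⁻¹ * ((α - β) ^ 2 * (α + β) ^ (p-2)) ≤ (α ^ (p/2) - β ^ (p/2)) ^ 2 ∧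
       C⁻¹ * ((α + β) ^ 2 * (α + β) ^ (p-2)) ≤ (α ^ (p/2) + β ^ (p/2)) ^ 2) := by
    intro α β hβ hβα
    have hα : 0 ≤ α := hβ.trans hβα
    have hab : 0 ≤ α + β := by linarith
    obtain ⟨l₁, u₁⟩ := h₁ α β hβ hβα
    obtain ⟨l₂, u₂⟩ := h₂ α β hβ hβα
    have hexp : p - 1 - 1 = p - 2 := by ring
    rw [hexp] at l₂ u₂
    have hG : 0 ≤ (α + β) ^ (p - 2) := rpow_nonneg hab _
    have hG2 : (α + β) ^ (p/2 - 1) * (α + β) ^ (p/2 - 1) = (α + β) ^ (p - 2) :=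
      rpow_sq_self_eq hab (by ring)
    have hD : 0 ≤ (α - β) * (α + β) ^ (p/2 - 1) :=
      mul_nonneg (by linarith) (rpow_nonneg hab _)
    have hXY : 0 ≤ α ^ (p/2) - β ^ (p/2) := le_trans (mul_nonneg hc₁.le hD) l₁
    have hDc : 0 ≤ C₁ * ((α - β) * (α + β) ^ (p/2 - 1)) := mul_nonneg hC₁.le hD
    have hDl : 0 ≤ c₁ * ((α - β) * (α + β) ^ (p/2 - 1)) := mul_nonneg hc₁.le hD
    have e4 : C₁ * ((α - β) * (α + β) ^ (p/2 - 1)) * (C₁ * ((α - β) * (α + β) ^ (p/2 - 1)))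
        = C₁ ^ 2 * ((α - β) ^ 2 * (α + β) ^ (p - 2)) := by
      linear_combination (C₁ ^ 2 * (α - β) ^ 2) * hG2
    have e5 : c₁ * ((α - β) * (α + β) ^ (p/2 - 1)) * (c₁ * ((α - β) * (α + β) ^ (p/2 - 1)))
        = c₁ ^ 2 * ((α - β) ^ 2 * (α + β) ^ (p - 2)) := by
      linear_combination (c₁ ^ 2 * (α - β) ^ 2) * hG2
    have hsq_u : (α ^ (p/2) - β ^ (p/2)) ^ 2 ≤ C₁ ^ 2 * ((α - β) ^ 2 * (α + β) ^ (p-2)) := by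
      calc (α ^ (p/2) - β ^ (p/2)) ^ 2
          = (α ^ (p/2) - β ^ (p/2)) * (α ^ (p/2) - β ^ (p/2)) := pow_two _
        _ ≤ C₁ * ((α - β) * (α + β) ^ (p/2 - 1)) * (C₁ * ((α - β) * (α + β) ^ (p/2 - 1))) :=
            mul_le_mul u₁ u₁ hXY hDc
        _ = C₁ ^ 2 * ((α - β) ^ 2 * (α + β) ^ (p-2)) := e4
    have hsq_l : c₁ ^ 2 * ((α - β) ^ 2 * (α + β) ^ (p-2)) ≤ (α ^ (p/2) - β ^ (p/2)) ^ 2 := by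
      calc c₁ ^ 2 * ((α - β) ^ 2 * (α + β) ^ (p-2))
          = c₁ * ((α - β) * (α + β) ^ (p/2 - 1)) * (c₁ * ((α - β) * (α + β) ^ (p/2 - 1))) := e5.symm
        _ ≤ (α ^ (p/2) - β ^ (p/2)) * (α ^ (p/2) - β ^ (p/2)) := mul_le_mul l₁ l₁ hDl hXY
        _ = (α ^ (p/2) - β ^ (p/2)) ^ 2 := (pow_two _).symm
    have hl₂ : c₂ * ((α - β) ^ 2 * (α + β) ^ (p-2)) ≤ (α ^ (p-1) - β ^ (p-1)) * (α - β) := by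
      have h6 := mul_le_mul_of_nonneg_right l₂ (sub_nonneg.mpr hβα)
      calc c₂ * ((α - β) ^ 2 * (α + β) ^ (p-2))
          = c₂ * ((α - β) * (α + β) ^ (p-2)) * (α - β) := by ring
        _ ≤ (α ^ (p-1) - β ^ (p-1)) * (α - β) := h6
    have hnn2 : 0 ≤ (α ^ (p-1) - β ^ (p-1)) * (α - β) :=
      le_trans (by positivity) hl₂
    have hβσ : β ^ (p/2) ≤ α ^ (p/2) := rpow_le_rpow hβ hβα hσ.le
    have hXp : α ^ (p/2) * α ^ (p/2) = α ^ p := rpow_sq_self_eq hα (by ring)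
    have hYp : β ^ (p/2) * β ^ (p/2) = β ^ p := rpow_sq_self_eq hβ (by ring)
    have hPα : α ^ (p-1) * α = α ^ p := rpow_mul_self_eq hα (by ring) (by positivity)
    have hYnn : 0 ≤ β ^ (p/2) := rpow_nonneg hβ _
    have hsum_ub : (α ^ (p/2) + β ^ (p/2)) ^ 2 ≤ 4 * α ^ p := by
      have hh := mul_nonneg (sub_nonneg.mpr hβσ)
        (by positivity : (0:ℝ) ≤ 3 * α ^ (p/2) + β ^ (p/2))
      linarith [hh, hXp, hYp]
    have hsum_lb : α ^ p ≤ (α ^ (p/2) + β ^ (p/2)) ^ 2 := by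
      have hh := mul_nonneg hYnn (by positivity : (0:ℝ) ≤ 2 * α ^ (p/2) + β ^ (p/2))
      linarith [hh, hXp]
    have habp : (α + β) ^ (2:ℕ) * (α + β) ^ (p - 2) = (α + β) ^ p := sq_mul_rpow_eq hab (by linarith)
    have hαab : α ^ p ≤ (α + β) ^ p := rpow_le_rpow hα (by linarith) (by linarith)
    have hab2α : (α + β) ^ p ≤ 2 ^ p * α ^ p := by
      calc (α + β) ^ p ≤ (2 * α) ^ p := rpow_le_rpow hab (by linarith) (by linarith)
        _ = 2 ^ p * α ^ p := mul_rpow (by norm_num) hα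
    have hPsum : α ^ p ≤ (α ^ (p-1) + β ^ (p-1)) * (α + β) := by
      have n1 : 0 ≤ α ^ (p-1) * β := mul_nonneg (rpow_nonneg hα _) hβ
      have n2 : 0 ≤ β ^ (p-1) * α := mul_nonneg (rpow_nonneg hβ _) hα
      have n3 : 0 ≤ β ^ (p-1) * β := mul_nonneg (rpow_nonneg hβ _) hβ
      linarith [hPα, n1, n2, n3]
    have h9 : 0 ≤ (α - β) ^ 2 * (α + β) ^ (p-2) := by positivity
    refine ⟨?_, ?_, ?_, ?_, ?_, ?_⟩
    · have step : C₁ ^ 2 * ((α - β) ^ 2 * (α + β) ^ (p-2)) ≤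
          (C₁ ^ 2 / c₂) * ((α ^ (p-1) - β ^ (p-1)) * (α - β)) := by
        rw [div_mul_eq_mul_div, le_div_iff₀ hc₂]
        linarith [mul_le_mul_of_nonneg_left hl₂ (sq_nonneg C₁)]
      linarith [hsq_u, step, mul_le_mul_of_nonneg_right hC1 hnn2]
    · have h12 : 0 ≤ (α ^ (p-1) + β ^ (p-1)) * (α + β) := le_trans (rpow_nonneg hα p) hPsum
      calc (α ^ (p/2) + β ^ (p/2)) ^ 2 ≤ 4 * α ^ p := hsum_ub
        _ ≤ 4 * ((α ^ (p-1) + β ^ (p-1)) * (α + β)) := by linarith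
        _ ≤ C * ((α ^ (p-1) + β ^ (p-1)) * (α + β)) := mul_le_mul_of_nonneg_right hC4 h12
    · calc (α ^ (p/2) - β ^ (p/2)) ^ 2 ≤ C₁ ^ 2 * ((α - β) ^ 2 * (α + β) ^ (p-2)) := hsq_u
        _ ≤ C * ((α - β) ^ 2 * (α + β) ^ (p-2)) := mul_le_mul_of_nonneg_right hC2 h9
    · have h10 : 0 ≤ (α + β) ^ p := rpow_nonneg hab p
      calc (α ^ (p/2) + β ^ (p/2)) ^ 2 ≤ 4 * α ^ p := hsum_ub
        _ ≤ 4 * (α + β) ^ p := by linarith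
        _ ≤ C * (α + β) ^ p := mul_le_mul_of_nonneg_right hC4 h10
        _ = C * ((α + β) ^ (2:ℕ) * (α + β) ^ (p-2)) := by rw [habp]
    · linarith [hsq_l, mul_le_mul_of_nonneg_right hCinv1 h9]
    · calc C⁻¹ * ((α + β) ^ (2:ℕ) * (α + β) ^ (p-2)) = C⁻¹ * (α + β) ^ p := by rw [habp]
        _ ≤ C⁻¹ * (2 ^ p * α ^ p) :=
            mul_le_mul_of_nonneg_left hab2α (inv_nonneg.mpr hC.le)
        _ = (C⁻¹ * 2 ^ p) * α ^ p := by ring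
        _ ≤ 1 * α ^ p := mul_le_mul_of_nonneg_right hCinv2 (rpow_nonneg hα p)
        _ = α ^ p := one_mul _
        _ ≤ (α ^ (p/2) + β ^ (p/2)) ^ 2 := hsum_lb
  refine ⟨C, hC, ?_⟩
  intro α β hα hβ
  rcases le_total β α with h | h
  · exact aux α β hβ h
  · obtain ⟨s1, s2, s3, s4, s5, s6⟩ := aux β α hα h
    rw [add_comm β α] at s2 s3 s4 s5 s6
    refine ⟨by linarith [s1], by linarith [s2], by linarith [s3],
      by linarith [s4], by linarith [s5], by linarith [s6]⟩

lemma affine_nonneg {u v t w : ℝ} (ht : |t| ≤ w) (h1 : 0 ≤ u - v * w)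
    (h2 : 0 ≤ u + v * w) : 0 ≤ u - v * t := by
  obtain ⟨h3, h4⟩ := abs_le.mp ht
  rcases le_total 0 v with hv | hv
  · nlinarith
  · nlinarith


/-- **Statement 15.** For every `p ∈ (1, ∞)` there is a constant `C = C(p) > 0` such that for
every real inner product space `H` and all `a, b ∈ H`, with `V(x) = ‖x‖^{(p−2)/2} • x`:
(1) `‖V(a) − V(b)‖² ≤ C·⟨‖a‖^{p−2} a − ‖b‖^{p−2} b, a − b⟩`; and
(2) if `(a, b) ≠ (0, 0)`, then
`C⁻¹·‖a − b‖²·(‖a‖+‖b‖)^{p−2} ≤ ‖V(a) − V(b)‖² ≤ C·‖a − b‖²·(‖a‖+‖b‖)^{p−2}`. -/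
theorem p_laplace_vector_inequalities (p : ℝ) (hp : 1 < p) :
    ∃ C : ℝ, 0 < C ∧
      ∀ (H : Type u) [NormedAddCommGroup H] [InnerProductSpace ℝ H] (a b : H),
        (‖(‖a‖ ^ ((p - 2) / 2)) • a - (‖b‖ ^ ((p - 2) / 2)) • b‖ ^ 2 ≤
          C * (inner ℝ ((‖a‖ ^ (p - 2)) • a - (‖b‖ ^ (p - 2)) • b) (a - b) : ℝ)) ∧
        ((a, b) ≠ (0, 0) →
          C⁻¹ * (‖a - b‖ ^ 2 * (‖a‖ + ‖b‖) ^ (p - 2)) ≤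
              ‖(‖a‖ ^ ((p - 2) / 2)) • a - (‖b‖ ^ ((p - 2) / 2)) • b‖ ^ 2 ∧
            ‖(‖a‖ ^ ((p - 2) / 2)) • a - (‖b‖ ^ ((p - 2) / 2)) • b‖ ^ 2 ≤
              C * (‖a - b‖ ^ 2 * (‖a‖ + ‖b‖) ^ (p - 2))) := by
  obtain ⟨C, hC, hS⟩ := scalar_main p hp
  refine ⟨C, hC, ?_⟩
  intro H _ _ a b
  set α := ‖a‖ with hαdef
  set β := ‖b‖ with hβdef
  have hα : 0 ≤ α := norm_nonneg a
  have hβ : 0 ≤ β := norm_nonneg b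
  set t : ℝ := inner ℝ a b with htdef
  have ht : |t| ≤ α * β := abs_real_inner_le_norm a b
  obtain ⟨s1, s2, s3, s4, s5, s6⟩ := hS α β hα hβ
  -- identities
  have ia1 : α ^ ((p-2)/2) * α = α ^ (p/2) :=
    rpow_mul_self_eq hα (by ring) (by positivity)
  have ib1 : β ^ ((p-2)/2) * β = β ^ (p/2) :=
    rpow_mul_self_eq hβ (by ring) (by positivity)
  have ia2 : α ^ (p-2) * α = α ^ (p-1) :=
    rpow_mul_self_eq hα (by ring) (by intro h; linarith [h])
  have ib2 : β ^ (p-2) * β = β ^ (p-1) :=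
    rpow_mul_self_eq hβ (by ring) (by intro h; linarith [h])
  have ia3 : α ^ (p/2) * α ^ (p/2) = α ^ p := rpow_sq_self_eq hα (by ring)
  have ib3 : β ^ (p/2) * β ^ (p/2) = β ^ p := rpow_sq_self_eq hβ (by ring)
  have ia4 : α ^ (p-1) * α = α ^ p :=
    rpow_mul_self_eq hα (by ring) (by intro h; linarith [h])
  have ib4 : β ^ (p-1) * β = β ^ p :=
    rpow_mul_self_eq hβ (by ring) (by intro h; linarith [h])
  -- norm expansions
  have habs : ∀ x : ℝ, 0 ≤ x → ∀ e : ℝ, ‖x ^ e‖ = x ^ e := fun x hx e =>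
    Real.norm_of_nonneg (rpow_nonneg hx e)
  have hVn : ‖(α ^ ((p - 2) / 2)) • a - (β ^ ((p - 2) / 2)) • b‖ ^ 2
      = α ^ p + β ^ p - 2 * (α ^ ((p-2)/2) * β ^ ((p-2)/2)) * t := by
    rw [norm_sub_sq_real, real_inner_smul_left, real_inner_smul_right,
      norm_smul, norm_smul, habs α hα, habs β hβ, ← hαdef, ← hβdef, ← htdef]
    have e1 : (α ^ ((p-2)/2) * α) ^ 2 = α ^ p := by
      rw [ia1, pow_two, ia3]
    have e2 : (β ^ ((p-2)/2) * β) ^ 2 = β ^ p := by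
      rw [ib1, pow_two, ib3]
    rw [e1, e2]; ring
  have hI : (inner ℝ ((α ^ (p - 2)) • a - (β ^ (p - 2)) • b) (a - b) : ℝ)
      = α ^ p + β ^ p - (α ^ (p-2) + β ^ (p-2)) * t := by
    rw [inner_sub_left, inner_sub_right, inner_sub_right,
      real_inner_smul_left, real_inner_smul_left, real_inner_smul_left, real_inner_smul_left,
      real_inner_self_eq_norm_sq, real_inner_self_eq_norm_sq, real_inner_comm a b,
      ← hαdef, ← hβdef, ← htdef]
    have e1 : α ^ (p-2) * α ^ 2 = α ^ p := by
      rw [pow_two, ← mul_assoc, ia2, ia4]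
    have e2 : β ^ (p-2) * β ^ 2 = β ^ p := by
      rw [pow_two, ← mul_assoc, ib2, ib4]
    linarith [e1, e2]
  have hD : ‖a - b‖ ^ 2 = α ^ 2 + β ^ 2 - 2 * t := by
    rw [norm_sub_sq_real, ← hαdef, ← hβdef, ← htdef]; ring
  constructor
  · -- part (1)
    rw [hVn, hI, ← sub_nonneg]
    have key : C * (α ^ p + β ^ p - (α ^ (p-2) + β ^ (p-2)) * t)
        - (α ^ p + β ^ p - 2 * (α ^ ((p-2)/2) * β ^ ((p-2)/2)) * t)
        = (C * (α ^ p + β ^ p) - (α ^ p + β ^ p))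
          - (C * (α ^ (p-2) + β ^ (p-2)) - 2 * (α ^ ((p-2)/2) * β ^ ((p-2)/2))) * t := by ring
    rw [key]
    apply affine_nonneg ht
    · have e1 : (C * (α ^ p + β ^ p) - (α ^ p + β ^ p))
          - (C * (α ^ (p-2) + β ^ (p-2)) - 2 * (α ^ ((p-2)/2) * β ^ ((p-2)/2))) * (α * β)
          = C * ((α ^ (p-1) - β ^ (p-1)) * (α - β)) - (α ^ (p/2) - β ^ (p/2)) ^ 2 := by
        linear_combination (-C * β) * ia2 + (-C * α) * ib2 - C * ia4 - C * ib4
          + (2 * β ^ ((p-2)/2) * β) * ia1 + (2 * α ^ (p/2)) * ib1 + ia3 + ib3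
      rw [e1]; linarith [s1]
    · have e2 : (C * (α ^ p + β ^ p) - (α ^ p + β ^ p))
          + (C * (α ^ (p-2) + β ^ (p-2)) - 2 * (α ^ ((p-2)/2) * β ^ ((p-2)/2))) * (α * β)
          = C * ((α ^ (p-1) + β ^ (p-1)) * (α + β)) - (α ^ (p/2) + β ^ (p/2)) ^ 2 := by
        linear_combination (C * β) * ia2 + (C * α) * ib2 - C * ia4 - C * ib4
          + (-2 * β ^ ((p-2)/2) * β) * ia1 + (-2 * α ^ (p/2)) * ib1 + ia3 + ib3
      rw [e2]; linarith [s2]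
  · intro _
    constructor
    · -- lower bound in (2)
      rw [hVn, hD, ← sub_nonneg]
      have key : α ^ p + β ^ p - 2 * (α ^ ((p-2)/2) * β ^ ((p-2)/2)) * t
          - C⁻¹ * ((α ^ 2 + β ^ 2 - 2 * t) * (α + β) ^ (p-2))
          = ((α ^ p + β ^ p) - C⁻¹ * ((α ^ 2 + β ^ 2) * (α + β) ^ (p-2)))
            - (2 * (α ^ ((p-2)/2) * β ^ ((p-2)/2)) - 2 * C⁻¹ * (α + β) ^ (p-2)) * t := by ring
      rw [key]
      apply affine_nonneg ht
      · have e1 : ((α ^ p + β ^ p) - C⁻¹ * ((α ^ 2 + β ^ 2) * (α + β) ^ (p-2)))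
            - (2 * (α ^ ((p-2)/2) * β ^ ((p-2)/2)) - 2 * C⁻¹ * (α + β) ^ (p-2)) * (α * β)
            = (α ^ (p/2) - β ^ (p/2)) ^ 2 - C⁻¹ * ((α - β) ^ 2 * (α + β) ^ (p-2)) := by
          linear_combination (-2 * β ^ ((p-2)/2) * β) * ia1 + (-2 * α ^ (p/2)) * ib1 - ia3 - ib3
        rw [e1]; linarith [s5]
      · have e2 : ((α ^ p + β ^ p) - C⁻¹ * ((α ^ 2 + β ^ 2) * (α + β) ^ (p-2)))
            + (2 * (α ^ ((p-2)/2) * β ^ ((p-2)/2)) - 2 * C⁻¹ * (α + β) ^ (p-2)) * (α * β)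
            = (α ^ (p/2) + β ^ (p/2)) ^ 2 - C⁻¹ * ((α + β) ^ 2 * (α + β) ^ (p-2)) := by
          linear_combination (2 * β ^ ((p-2)/2) * β) * ia1 + (2 * α ^ (p/2)) * ib1 - ia3 - ib3
        rw [e2]; linarith [s6]
    · -- upper bound in (2)
      rw [hVn, hD, ← sub_nonneg]
      have key : C * ((α ^ 2 + β ^ 2 - 2 * t) * (α + β) ^ (p-2))
          - (α ^ p + β ^ p - 2 * (α ^ ((p-2)/2) * β ^ ((p-2)/2)) * t)
          = (C * ((α ^ 2 + β ^ 2) * (α + β) ^ (p-2)) - (α ^ p + β ^ p))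
            - (2 * C * (α + β) ^ (p-2) - 2 * (α ^ ((p-2)/2) * β ^ ((p-2)/2))) * t := by ring
      rw [key]
      apply affine_nonneg ht
      · have e1 : (C * ((α ^ 2 + β ^ 2) * (α + β) ^ (p-2)) - (α ^ p + β ^ p))
            - (2 * C * (α + β) ^ (p-2) - 2 * (α ^ ((p-2)/2) * β ^ ((p-2)/2))) * (α * β)
            = C * ((α - β) ^ 2 * (α + β) ^ (p-2)) - (α ^ (p/2) - β ^ (p/2)) ^ 2 := by
          linear_combination (2 * β ^ ((p-2)/2) * β) * ia1 + (2 * α ^ (p/2)) * ib1 + ia3 + ib3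
        rw [e1]; linarith [s3]
      · have e2 : (C * ((α ^ 2 + β ^ 2) * (α + β) ^ (p-2)) - (α ^ p + β ^ p))
            + (2 * C * (α + β) ^ (p-2) - 2 * (α ^ ((p-2)/2) * β ^ ((p-2)/2))) * (α * β)
            = C * ((α + β) ^ 2 * (α + β) ^ (p-2)) - (α ^ (p/2) + β ^ (p/2)) ^ 2 := by
          linear_combination (-2 * β ^ ((p-2)/2) * β) * ia1 + (-2 * α ^ (p/2)) * ib1 + ia3 + ib3
        rw [e2]; linarith [s4]

end Paper
end
end

section
/- For every p ∈ [2, ∞) there exists a constant C = C(p) > 0 such that for every real inner product space H and all a, b ∈ H: ‖a − b‖^p ≤ C·⟨‖a‖^{p−2}a − ‖b‖^{p−2}b, a − b⟩. -/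
noncomputable section

namespace Paper

universe u

private lemma rpow_split (x p : ℝ) (hx : 0 ≤ x) (hp : 2 ≤ p) :
    x ^ p = x ^ (p - 2) * x ^ 2 := by
  rcases eq_or_lt_of_le hx with h | h
  · rw [← h]
    rw [Real.zero_rpow (by linarith : p ≠ 0)]
    simp
  · have : x ^ 2 = x ^ ((2 : ℕ) : ℝ) := (Real.rpow_natCast x 2).symm
    rw [this, ← Real.rpow_add h]
    norm_num

/-- **Statement 16.** For every `p ∈ [2, ∞)` there is a constant `C = C(p) > 0` such that for
every real inner product space `H` and all `a, b ∈ H`: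
`‖a − b‖^p ≤ C·⟨‖a‖^{p−2} a − ‖b‖^{p−2} b, a − b⟩`. -/
theorem p_laplace_monotonicity (p : ℝ) (hp : 2 ≤ p) :
    ∃ C : ℝ, 0 < C ∧
      ∀ (H : Type u) [NormedAddCommGroup H] [InnerProductSpace ℝ H] (a b : H),
        ‖a - b‖ ^ p ≤
          C * (inner ℝ ((‖a‖ ^ (p - 2)) • a - (‖b‖ ^ (p - 2)) • b) (a - b) : ℝ) := by
  refine ⟨2 ^ (p - 1), by positivity, ?_⟩
  intro H _ _ a b
  set d := p - 2 with hd
  have hd0 : (0 : ℝ) ≤ d := by simp [hd]; linarith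
  set α := ‖a‖ ^ d with hα'
  set β := ‖b‖ ^ d with hβ'
  have hα : 0 ≤ α := Real.rpow_nonneg (norm_nonneg a) d
  have hβ : 0 ≤ β := Real.rpow_nonneg (norm_nonneg b) d
  have hinner : (inner ℝ (α • a - β • b) (a - b) : ℝ)
      = α * ‖a‖ ^ 2 + β * ‖b‖ ^ 2 - (α + β) * inner ℝ a b := by
    simp only [inner_sub_left, inner_sub_right, real_inner_smul_left,
      real_inner_self_eq_norm_sq, real_inner_comm b a]
    ring
  have hnorm : ‖a - b‖ ^ 2 = ‖a‖ ^ 2 - 2 * inner ℝ a b + ‖b‖ ^ 2 := norm_sub_sq_real a b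
  -- monotonicity product
  have mono : 0 ≤ (α - β) * (‖a‖ ^ 2 - ‖b‖ ^ 2) := by
    rcases le_total ‖a‖ ‖b‖ with h | h
    · have h1 : α ≤ β := Real.rpow_le_rpow (norm_nonneg a) h hd0
      have h2 : ‖a‖ ^ 2 ≤ ‖b‖ ^ 2 := by nlinarith [norm_nonneg a]
      nlinarith
    · have h1 : β ≤ α := Real.rpow_le_rpow (norm_nonneg b) h hd0
      have h2 : ‖b‖ ^ 2 ≤ ‖a‖ ^ 2 := by nlinarith [norm_nonneg b]
      nlinarith
  have step2 : (α + β) * ‖a - b‖ ^ 2 ≤ 2 * (inner ℝ (α • a - β • b) (a - b) : ℝ) := by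
    nlinarith [mono, hinner, hnorm]
  -- ‖a-b‖^d ≤ 2^d * (α + β)
  have hdle : ‖a - b‖ ^ d ≤ 2 ^ d * (α + β) := by
    rcases le_total ‖a‖ ‖b‖ with h | h
    · have h1 : ‖a - b‖ ≤ 2 * ‖b‖ := by
        calc ‖a - b‖ ≤ ‖a‖ + ‖b‖ := norm_sub_le a b
        _ ≤ 2 * ‖b‖ := by linarith
      calc ‖a - b‖ ^ d ≤ (2 * ‖b‖) ^ d :=
            Real.rpow_le_rpow (norm_nonneg _) h1 hd0
        _ = 2 ^ d * β := by
            rw [Real.mul_rpow (by norm_num) (norm_nonneg b)]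
        _ ≤ 2 ^ d * (α + β) := by
            have h2 : (0:ℝ) ≤ 2 ^ d := Real.rpow_nonneg (by norm_num) d
            nlinarith
    · have h1 : ‖a - b‖ ≤ 2 * ‖a‖ := by
        calc ‖a - b‖ ≤ ‖a‖ + ‖b‖ := norm_sub_le a b
        _ ≤ 2 * ‖a‖ := by linarith
      calc ‖a - b‖ ^ d ≤ (2 * ‖a‖) ^ d :=
            Real.rpow_le_rpow (norm_nonneg _) h1 hd0
        _ = 2 ^ d * α := by
            rw [Real.mul_rpow (by norm_num) (norm_nonneg a)]
        _ ≤ 2 ^ d * (α + β) := by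
            have h2 : (0:ℝ) ≤ 2 ^ d := Real.rpow_nonneg (by norm_num) d
            nlinarith
  have hsplit : ‖a - b‖ ^ p = ‖a - b‖ ^ d * ‖a - b‖ ^ 2 :=
    rpow_split _ p (norm_nonneg _) hp
  have h2d : (0:ℝ) ≤ 2 ^ d := Real.rpow_nonneg (by norm_num) d
  have hC : (2:ℝ) ^ (p - 1) = 2 ^ d * 2 := by
    rw [show p - 1 = d + 1 by simp [hd]; ring, Real.rpow_add (by norm_num)]
    norm_num
  calc ‖a - b‖ ^ p = ‖a - b‖ ^ d * ‖a - b‖ ^ 2 := hsplit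
    _ ≤ (2 ^ d * (α + β)) * ‖a - b‖ ^ 2 :=
        mul_le_mul_of_nonneg_right hdle (sq_nonneg _)
    _ = 2 ^ d * ((α + β) * ‖a - b‖ ^ 2) := by ring
    _ ≤ 2 ^ d * (2 * (inner ℝ (α • a - β • b) (a - b) : ℝ)) :=
        mul_le_mul_of_nonneg_left step2 h2d
    _ = 2 ^ (p - 1) * (inner ℝ (α • a - β • b) (a - b) : ℝ) := by rw [hC]; ring

end Paper
end
end
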